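/- The greedy vector is a base: if F is submodular with F(∅)=0 and s is defined by s_{jk} = F({j1,...,jk}) − F({j1,...,j_{k−1}}) for any ordering j1,...,jp of V, then s ∈ B(F), i.e., s(A) ≤ F(A) for all A ⊆ V and s(V) = F(V). In particular the base polyhedron B(F) is nonempty. -/

import Mathlib

def Submodular {p : ℕ} (F : Finset (Fin p) → ℝ) : Prop :=
  ∀ A B : Finset (Fin p), F (A ∪ B) + F (A ∩ B) ≤ F A + F B

/-- Membership in the base polyhedron `B(F)`. -/
def MemB {p : ℕ} (F : Finset (Fin p) → ℝ) (s : Fin p → ℝ) : Prop :=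
  (∀ A : Finset (Fin p), ∑ k ∈ A, s k ≤ F A) ∧
    ∑ k, s k = F Finset.univ

/-- The greedy vector associated with any ordering of `V` is a base; in particular
the base polyhedron is nonempty. -/
theorem greedy_vector_mem_base {p : ℕ} (F : Finset (Fin p) → ℝ)
    (hF : Submodular F) (h0 : F ∅ = 0)
    (σ : Equiv.Perm (Fin p)) (s : Fin p → ℝ)
    (hs : ∀ k : Fin p,
      s (σ k) = F ((Finset.Iic k).image σ) - F ((Finset.Iio k).image σ)) :
    MemB F s ∧ ∃ t : Fin p → ℝ, MemB F t := by
  have key : ∀ A : Finset (Fin p), ∑ k ∈ A, s k ≤ F A := by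
    intro A
    induction A using Finset.strongInduction with
    | _ A ih =>
      rcases A.eq_empty_or_nonempty with rfl | hA
      · simp [h0]
      · have hne : (A.image σ.symm).Nonempty := hA.image _
        set k := (A.image σ.symm).max' hne with hk
        have hkA : σ k ∈ A := by
          have hm := (A.image σ.symm).max'_mem hne
          rw [← hk] at hm
          obtain ⟨a, ha, hak⟩ := Finset.mem_image.mp hm
          rwa [← hak, Equiv.apply_symm_apply]
        have hle : ∀ a ∈ A, σ.symm a ≤ k := fun a ha =>
          Finset.le_max' _ _ (Finset.mem_image_of_mem _ ha)
        have hsub : A ⊆ (Finset.Iic k).image σ := by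
          intro a ha
          exact Finset.mem_image.mpr ⟨σ.symm a, Finset.mem_Iic.mpr (hle a ha),
            Equiv.apply_symm_apply σ a⟩
        have herase : A.erase (σ k) ⊆ (Finset.Iio k).image σ := by
          intro a ha
          obtain ⟨hne', haA⟩ := Finset.mem_erase.mp ha
          refine Finset.mem_image.mpr ⟨σ.symm a, Finset.mem_Iio.mpr ?_,
            Equiv.apply_symm_apply σ a⟩
          refine lt_of_le_of_ne (hle a haA) ?_
          intro h
          apply hne'
          rw [← h, Equiv.apply_symm_apply]
        have hunion : A ∪ (Finset.Iio k).image σ = (Finset.Iic k).image σ := by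
          apply Finset.Subset.antisymm
          · refine Finset.union_subset hsub (Finset.image_subset_image ?_)
            intro x hx
            exact Finset.mem_Iic.mpr (le_of_lt (Finset.mem_Iio.mp hx))
          · intro a ha
            obtain ⟨j, hj, rfl⟩ := Finset.mem_image.mp ha
            rcases lt_or_eq_of_le (Finset.mem_Iic.mp hj) with hlt | rfl
            · exact Finset.mem_union_right _
                (Finset.mem_image_of_mem _ (Finset.mem_Iio.mpr hlt))
            · exact Finset.mem_union_left _ hkA
        have hinter : A ∩ (Finset.Iio k).image σ = A.erase (σ k) := by
          apply Finset.Subset.antisymm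
          · intro a ha
            obtain ⟨haA, haT⟩ := Finset.mem_inter.mp ha
            refine Finset.mem_erase.mpr ⟨?_, haA⟩
            obtain ⟨j, hj, rfl⟩ := Finset.mem_image.mp haT
            intro h
            exact absurd (σ.injective h) (ne_of_lt (Finset.mem_Iio.mp hj))
          · intro a ha
            exact Finset.mem_inter.mpr ⟨(Finset.mem_erase.mp ha).2, herase ha⟩
        have hsm := hF A ((Finset.Iio k).image σ)
        rw [hunion, hinter] at hsm
        have h1 : s (σ k) ≤ F A - F (A.erase (σ k)) := by
          rw [hs k]; linarith
        have h2 := ih (A.erase (σ k)) (Finset.erase_ssubset hkA)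
        have h3 : ∑ a ∈ A, s a = s (σ k) + ∑ a ∈ A.erase (σ k), s a :=
          (Finset.add_sum_erase _ _ hkA).symm
        linarith
  have heq : ∑ a, s a = F Finset.univ := by
    have main : ∀ n : ℕ, n ≤ p →
        ∑ j ∈ Finset.univ.filter (fun j : Fin p => j.val < n), s (σ j) =
          F ((Finset.univ.filter (fun j : Fin p => j.val < n)).image σ) := by
      intro n
      induction n with
      | zero => intro _; simp [h0]
      | succ n ihn =>
        intro hnp
        have hn : n < p := hnp
        have hiic : Finset.univ.filter (fun j : Fin p => j.val < n + 1) =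
            Finset.Iic ⟨n, hn⟩ := by
          ext j
          simp [Nat.lt_succ_iff, Fin.le_def]
        have hiio : Finset.univ.filter (fun j : Fin p => j.val < n) =
            Finset.Iio ⟨n, hn⟩ := by
          ext j
          simp [Fin.lt_def]
        have hins : Finset.Iic (⟨n, hn⟩ : Fin p) =
            insert ⟨n, hn⟩ (Finset.Iio ⟨n, hn⟩) := by
          ext j
          simp [Finset.mem_insert, le_iff_lt_or_eq, or_comm]
        have hnot : (⟨n, hn⟩ : Fin p) ∉ Finset.Iio (⟨n, hn⟩ : Fin p) := by simp
        rw [hiic, hins, Finset.sum_insert hnot, hs ⟨n, hn⟩, ← hins, ← hiio,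
          ihn (le_of_lt hn), hiio]
        ring
    have hp := main p (le_refl p)
    have huniv : Finset.univ.filter (fun j : Fin p => j.val < p) = Finset.univ := by
      ext j; simp [j.isLt]
    rw [huniv] at hp
    have himg : Finset.univ.image (⇑σ) = Finset.univ := by
      ext a
      simp only [Finset.mem_image, Finset.mem_univ, true_and, iff_true]
      exact ⟨σ.symm a, σ.apply_symm_apply a⟩
    rw [himg] at hp
    calc ∑ a, s a = ∑ j, s (σ j) := (Equiv.sum_comp σ s).symm
      _ = F Finset.univ := hp
  exact ⟨⟨key, heq⟩, s, key, heq⟩
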